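/- Let P be a primitive stochastic matrix on a finite nonempty state space X with stationary distribution π, Π the matrix each of whose rows equals π, F the fundamental matrix, and h the mean hitting times of the chain. Then for all states i, j one has π_j · h(i,j) = F_{j,j} − F_{i,j}. -/

import Mathlib

open Matrix BigOperators Finset

theorem stmt_3
    {X : Type*} [Fintype X] [Nonempty X] [DecidableEq X]
    (P : Matrix X X ℝ)
    (hP_nonneg : ∀ i j, 0 ≤ P i j)
    (hP_row : ∀ i, ∑ j, P i j = 1)
    (hP_prim : ∃ N : ℕ, 1 ≤ N ∧ ∀ i j, 0 < (P ^ N) i j)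
    (pi : X → ℝ)
    (hpi_pos : ∀ i, 0 < pi i)
    (hpi_sum : ∑ i, pi i = 1)
    (hpi_stat : ∀ j, ∑ i, pi i * P i j = pi j)
    (PiM : Matrix X X ℝ)
    (hPiM : ∀ i j, PiM i j = pi j)
    (F : Matrix X X ℝ)
    (hF1 : F * (1 - P + PiM) = 1)
    (hF2 : (1 - P + PiM) * F = 1)
    (h : X → X → ℝ)
    (hdiag : ∀ j, h j j = 0)
    (hrec : ∀ i j, i ≠ j → h i j = 1 + ∑ k, P i k * h k j)
    : ∀ i j, pi j * h i j = F j j - F i j := by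
  intro i j
  have hpj := hpi_pos j
  have hpj' : pi j ≠ 0 := ne_of_gt hpj
  set S : ℝ := ∑ k, pi k * h k j with hS
  -- swap lemma
  have swap : ∑ i', pi i' * ∑ k, P i' k * h k j = S := by
    calc ∑ i', pi i' * ∑ k, P i' k * h k j
        = ∑ i', ∑ k, pi i' * P i' k * h k j := by
          simp_rw [Finset.mul_sum, mul_assoc]
      _ = ∑ k, ∑ i', pi i' * P i' k * h k j := Finset.sum_comm
      _ = ∑ k, (∑ i', pi i' * P i' k) * h k j := by
          simp_rw [Finset.sum_mul]
      _ = S := by simp_rw [hpi_stat]; exact hS.symm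
  -- key identity
  have key : ∑ k, P j k * h k j = 1 / pi j - 1 := by
    have e1 : ∑ i', pi i' * (h i' j - (1 + ∑ k, P i' k * h k j))
        = pi j * (h j j - (1 + ∑ k, P j k * h k j)) := by
      apply Finset.sum_eq_single
      · intro b _ hb
        rw [hrec b j hb]; ring
      · intro hj; exact absurd (Finset.mem_univ j) hj
    have e2 : ∑ i', pi i' * (h i' j - (1 + ∑ k, P i' k * h k j)) = -1 := by
      have expand : ∀ i', pi i' * (h i' j - (1 + ∑ k, P i' k * h k j))
          = pi i' * h i' j - pi i' - pi i' * ∑ k, P i' k * h k j := by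
        intro i'; ring
      simp_rw [expand]
      rw [Finset.sum_sub_distrib, Finset.sum_sub_distrib, swap, hpi_sum, ← hS]
      ring
    rw [e2, hdiag] at e1
    field_simp at e1 ⊢
    linarith
  -- row sums of F are 1
  have hrowA : ∀ m : X, ∑ k, (1 - P + PiM) m k = 1 := by
    intro m
    simp only [Matrix.add_apply, Matrix.sub_apply, Matrix.one_apply]
    rw [Finset.sum_add_distrib, Finset.sum_sub_distrib]
    simp [hP_row, hPiM, hpi_sum]
  have hFrow : ∀ i' : X, ∑ k, F i' k = 1 := by
    intro i'
    have := congrArg (fun M : Matrix X X ℝ => ∑ k, M i' k) hF1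
    simp only [Matrix.mul_apply, Matrix.one_apply] at this
    rw [Finset.sum_comm] at this
    simp_rw [← Finset.mul_sum, hrowA, mul_one] at this
    simpa using this
  -- main computation: (I - P + Π) applied to h(·,j)
  have main : ∀ m : X, ∑ k, (1 - P + PiM) m k * h k j
      = (1 + S) - (if m = j then 1 / pi j else 0) := by
    intro m
    have expand : ∑ k, (1 - P + PiM) m k * h k j
        = h m j - ∑ k, P m k * h k j + S := by
      simp only [Matrix.add_apply, Matrix.sub_apply, Matrix.one_apply]
      simp only [add_mul, sub_mul, hPiM]
      rw [Finset.sum_add_distrib, Finset.sum_sub_distrib]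
      simp [ite_mul, Finset.sum_ite_eq, hS]
    by_cases hm : m = j
    · subst hm
      have hif : (if m = m then 1 / pi m else 0) = 1 / pi m := if_pos rfl
      rw [expand, hdiag, key, hif]
      ring
    · rw [expand, hrec m j hm]
      simp only [if_neg hm]
      ring
  -- conclusion: h i' j = (1 + S) - F i' j / pi j
  have final : ∀ i' : X, h i' j = (1 + S) - F i' j / pi j := by
    intro i'
    have h1 : h i' j = ∑ k, (F * (1 - P + PiM)) i' k * h k j := by
      rw [hF1]
      simp [Matrix.one_apply, ite_mul, Finset.sum_ite_eq]
    rw [h1]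
    calc ∑ k, (F * (1 - P + PiM)) i' k * h k j
        = ∑ m, F i' m * ∑ k, (1 - P + PiM) m k * h k j := by
          simp_rw [Matrix.mul_apply, Finset.sum_mul, Finset.mul_sum, mul_assoc]
          exact Finset.sum_comm
      _ = ∑ m, F i' m * ((1 + S) - (if m = j then 1 / pi j else 0)) := by
          simp_rw [main]
      _ = (1 + S) - F i' j / pi j := by
          simp_rw [mul_sub, mul_ite, mul_zero]
          rw [Finset.sum_sub_distrib, ← Finset.sum_mul, hFrow,
            Finset.sum_ite_eq' Finset.univ j (fun m => F i' m * (1 / pi j))]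
          simp
          ring
  have hj0 := final j
  rw [hdiag] at hj0
  have hj0' : F j j = (1 + S) * pi j := by
    field_simp at hj0
    linarith
  rw [final i, hj0']
  field_simp
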